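/- arXiv:2507.03465 — 4 statements merged into one kernel-verified Lean document; each statement's English description precedes it below -/
import Mathlib

section
/- Let Σ be a finite nonempty alphabet and let L ⊆ ℬ^Σ be a regular tree language. Then L has asymptotic density 0 (i.e. P_lim(L) = 0) if and only if there exists a tree S ∈ ℬ^Σ such that no tree containing S as a subtree belongs to L, i.e. {T ∈ ℬ^Σ : S ⪯ T} ⊆ ℬ^Σ \ L. -/
open Filter Topology

namespace Sparse

inductive BTree (α : Type*) where
  | nil : BTree α
  | node : α → BTree α → BTree α → BTree α

namespace BTree

variable {α : Type*}

/-- The number of nodes of a binary tree. -/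
def size : BTree α → ℕ
  | nil => 0
  | node _ l r => size l + size r + 1

/-- `Subtree S T` means `S = T`, or `T` is nonempty and `S` is a subtree of the left or
right subtree of the root of `T`. -/
inductive Subtree : BTree α → BTree α → Prop where
  | refl (T : BTree α) : Subtree T T
  | left {S l r : BTree α} {a : α} : Subtree S l → Subtree S (node a l r)
  | right {S l r : BTree α} {a : α} : Subtree S r → Subtree S (node a l r)

end BTree

variable {α : Type*}

/-- A run of a tree automaton with transition relation `Δ` on a binary tree: the empty tree is
assigned `none` (i.e. `⊥`), and a nonempty tree with root label `a` and run values `ql`, `qr` on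
the two subtrees is assigned a state `q` with `(ql, qr, a, q) ∈ Δ`. -/
inductive Run {Q : Type*} (Δ : Option Q → Option Q → α → Q → Prop) :
    BTree α → Option Q → Prop where
  | nil : Run Δ BTree.nil none
  | node {a : α} {l r : BTree α} {ql qr : Option Q} {q : Q} :
      Run Δ l ql → Run Δ r qr → Δ ql qr a q → Run Δ (BTree.node a l r) (some q)

/-- A tree automaton with transitions `Δ` and accepting states `F` accepts `T` if some run
assigns `T` a state in `F`. -/
def TAccepts {Q : Type*} (Δ : Option Q → Option Q → α → Q → Prop) (F : Set Q)
    (T : BTree α) : Prop :=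
  ∃ q ∈ F, Run Δ T (some q)

/-- A tree language is regular iff it is the set of trees accepted by some tree automaton
with finitely many states. -/
def RegularTreeLang (L : Set (BTree α)) : Prop :=
  ∃ (Q : Type) (_ : Fintype Q) (Δ : Option Q → Option Q → α → Q → Prop) (F : Set Q),
    L = {T | TAccepts Δ F T}

/-- The relative number of `n`-node trees in `L`:
`|L ∩ ℬ^Σ_n| / (C_n ⬝ |Σ|^n)`, where `C_n` is the `n`-th Catalan number. -/
noncomputable def density [Fintype α] (L : Set (BTree α)) (n : ℕ) : ℝ :=
  (Nat.card {T : BTree α // T ∈ L ∧ T.size = n} : ℝ) /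
    ((catalan n : ℝ) * (Fintype.card α : ℝ) ^ n)

/-- `L` has asymptotic density `c` if `density L n` tends to `c` as `n → ∞`. -/
def HasDensity [Fintype α] (L : Set (BTree α)) (c : ℝ) : Prop :=
  Tendsto (density L) atTop (𝓝 c)

/-- The upper asymptotic density `P̄_lim(L) = limsup_n density L n`. -/
noncomputable def upperDensity [Fintype α] (L : Set (BTree α)) : ℝ :=
  limsup (density L) atTop

/-- `LT = {conc_a(S, T) : a ∈ Σ, S ∈ L}`. -/
def concL (L : Set (BTree α)) (T : BTree α) : Set (BTree α) :=
  {X | ∃ (a : α) (S : BTree α), S ∈ L ∧ X = BTree.node a S T}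

/-- `LT⁻¹ = {S : ∃ a, conc_a(S, T) ∈ L}`. -/
def quotR (L : Set (BTree α)) (T : BTree α) : Set (BTree α) :=
  {S | ∃ a : α, BTree.node a S T ∈ L}

/-- `T⁻¹L = {S : ∃ a, conc_a(T, S) ∈ L}`. -/
def quotL (T : BTree α) (L : Set (BTree α)) : Set (BTree α) :=
  {S | ∃ a : α, BTree.node a T S ∈ L}

/-- `L[T_k, …, T_1]⁻¹`, where the list is `[T_k, …, T_1]` (so the head is `T_k`):
`L[]⁻¹ = L` and `L[T_k,…,T_1]⁻¹ = (L[T_{k-1},…,T_1]⁻¹)T_k⁻¹ ∪ T_k⁻¹(L[T_{k-1},…,T_1]⁻¹)`. -/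
def quotIter (L : Set (BTree α)) : List (BTree α) → Set (BTree α)
  | [] => L
  | T :: Ts => quotR (quotIter L Ts) T ∪ quotL T (quotIter L Ts)

/-- A state `q` is reachable if some run of the automaton on some tree assigns `q` to the tree. -/
def TReachable {Q : Type*} (Δ : Option Q → Option Q → α → Q → Prop) (q : Q) : Prop :=
  ∃ T : BTree α, Run Δ T (some q)

/-- A set of states `V` is a sink if every transition involving a state of `V` as one of the
two child values leads into `V`. -/
def Sink {Q : Type*} (Δ : Option Q → Option Q → α → Q → Prop) (V : Set Q) : Prop :=
  ∀ q ∈ V, ∀ (q' : Option Q) (a : α) (q'' : Q),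
    (Δ (some q) q' a q'' ∨ Δ q' (some q) a q'') → q'' ∈ V


section Aux
open BTree


lemma size_eq_zero {T : BTree α} : T.size = 0 ↔ T = BTree.nil := by
  cases T <;> simp [BTree.size]

lemma finite_size_le (α : Type*) [Finite α] (n : ℕ) : {T : BTree α | T.size ≤ n}.Finite := by
  induction n with
  | zero =>
    apply Set.Finite.subset (Set.finite_singleton BTree.nil)
    intro T hT
    simp only [Set.mem_setOf_eq, Nat.le_zero] at hT
    simp [size_eq_zero.mp hT]
  | succ n ih =>
    apply Set.Finite.subset (Set.Finite.insert BTree.nil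
      (((Set.finite_univ (α := α)).prod (ih.prod ih)).image
        (fun p : α × BTree α × BTree α => BTree.node p.1 p.2.1 p.2.2)))
    intro T hT
    cases T with
    | nil => exact Set.mem_insert _ _
    | node a l r =>
      refine Set.mem_insert_of_mem _ ⟨(a, l, r), ⟨trivial, ?_, ?_⟩, rfl⟩ <;>
      · simp only [Set.mem_setOf_eq, BTree.size] at hT ⊢
        omega

instance finite_size (α : Type*) [Finite α] (n : ℕ) : Finite {T : BTree α // T.size = n} := by
  have h := (finite_size_le α n).subset (fun T hT => le_of_eq (hT : _ = n))
  exact @Finite.of_equiv _ _ h.to_subtype (Equiv.subtypeEquivRight fun _ => Iff.rfl)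

lemma finite_pred (α : Type*) [Finite α] (P : BTree α → Prop) (n : ℕ) :
    Finite {T : BTree α // P T ∧ T.size = n} :=
  Finite.of_injective (fun x => (⟨x.1, x.2.2⟩ : {T : BTree α // T.size = n})) <| by
    intro x y h
    simp only [Subtype.mk.injEq] at h
    exact Subtype.ext h

lemma nat_card_sigma {ι : Type*} [Fintype ι] (f : ι → Type*) [∀ i, Finite (f i)] :
    Nat.card (Σ i, f i) = ∑ i, Nat.card (f i) := by
  letI : ∀ i, Fintype (f i) := fun i => Fintype.ofFinite _
  simp [Nat.card_eq_fintype_card, Fintype.card_sigma]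


variable [Fintype α]

lemma card_node_level (P : BTree α → Prop) (n : ℕ) :
    Nat.card {T : BTree α // (∃ a l r, T = BTree.node a l r ∧ P l ∧ P r) ∧ T.size = n + 1}
      = ∑ i : Fin (n + 1), Fintype.card α * Nat.card {T : BTree α // P T ∧ T.size = (i : ℕ)}
          * Nat.card {T : BTree α // P T ∧ T.size = n - (i : ℕ)} := by
  classical
  haveI := fun k => finite_pred α P k
  let g : (Σ i : Fin (n + 1), α × {T : BTree α // P T ∧ T.size = (i : ℕ)}
      × {T : BTree α // P T ∧ T.size = n - (i : ℕ)}) →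
      {T : BTree α // (∃ a l r, T = BTree.node a l r ∧ P l ∧ P r) ∧ T.size = n + 1} :=
    fun x => ⟨BTree.node x.2.1 x.2.2.1.1 x.2.2.2.1, ⟨x.2.1, _, _, rfl, x.2.2.1.2.1, x.2.2.2.2.1⟩, by
      have h1 := x.2.2.1.2.2; have h2 := x.2.2.2.2.2
      have h3 : (x.1 : ℕ) ≤ n := Nat.lt_succ_iff.mp x.1.2
      simp only [BTree.size]
      omega⟩
  have hg : Function.Bijective g := by
    constructor
    · rintro ⟨⟨i, hi⟩, a, ⟨l, hl⟩, ⟨r, hr⟩⟩ ⟨⟨j, hj⟩, b, ⟨l', hl'⟩, ⟨r', hr'⟩⟩ h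
      simp only [g, Subtype.mk.injEq, BTree.node.injEq] at h
      obtain ⟨hab, hll, hrr⟩ := h
      subst hab; subst hll; subst hrr
      have hij : i = j := by
        have h1 := hl.2; have h2 := hl'.2
        simp only [Fin.val_mk] at h1 h2
        omega
      subst hij
      rfl
    · rintro ⟨T, ⟨a, l, r, rfl, hPl, hPr⟩, hT⟩
      simp only [BTree.size] at hT
      have hl : l.size < n + 1 := by omega
      refine ⟨⟨⟨l.size, hl⟩, a, ⟨l, hPl, rfl⟩, ⟨r, hPr, ?_⟩⟩, Subtype.ext rfl⟩
      simp only [Fin.val_mk]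
      omega
  rw [← Nat.card_eq_of_bijective g hg, nat_card_sigma]
  refine Finset.sum_congr rfl fun i _ => ?_
  rw [Nat.card_prod, Nat.card_prod, Nat.card_eq_fintype_card, mul_assoc]

lemma card_size (n : ℕ) :
    Nat.card {T : BTree α // T.size = n} = catalan n * Fintype.card α ^ n := by
  induction n using Nat.strong_induction_on with
  | _ n ih =>
    match n with
    | 0 =>
      rw [catalan_zero, pow_zero, mul_one]
      haveI : Unique {T : BTree α // T.size = 0} :=
        { default := ⟨BTree.nil, rfl⟩, uniq := fun x => Subtype.ext (size_eq_zero.mp x.2) }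
      exact Nat.card_unique
    | (m + 1) =>
      have hcongr : Nat.card {T : BTree α // T.size = m + 1}
          = Nat.card {T : BTree α // (∃ a l r, T = BTree.node a l r ∧ True ∧ True) ∧ T.size = m + 1} := by
        refine Nat.card_congr (Equiv.subtypeEquivRight fun T => ?_).symm
        constructor
        · exact fun h => h.2
        · intro h
          refine ⟨?_, h⟩
          cases T with
          | nil => simp [BTree.size] at h
          | node a l r => exact ⟨a, l, r, rfl, trivial, trivial⟩
      have htrue : ∀ k : ℕ, Nat.card {T : BTree α // True ∧ T.size = k}
          = Nat.card {T : BTree α // T.size = k} := fun k =>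
        Nat.card_congr (Equiv.subtypeEquivRight fun T => by simp)
      rw [hcongr, card_node_level]
      have : ∀ i : Fin (m + 1),
          Fintype.card α * Nat.card {T : BTree α // True ∧ T.size = (i : ℕ)}
            * Nat.card {T : BTree α // True ∧ T.size = m - (i : ℕ)}
          = Fintype.card α * (catalan (i : ℕ) * catalan (m - (i : ℕ))) * Fintype.card α ^ m := by
        intro i
        have hi : (i : ℕ) ≤ m := Nat.lt_succ_iff.mp i.2
        rw [htrue, htrue, ih _ i.2, ih _ (by omega : m - (i : ℕ) < m + 1)]
        have : Fintype.card α ^ (i : ℕ) * Fintype.card α ^ (m - (i : ℕ)) = Fintype.card α ^ m := by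
          rw [← pow_add]; congr 1; omega
        rw [← this]
        ring
      rw [Finset.sum_congr rfl fun i _ => this i, ← Finset.sum_mul, ← Finset.mul_sum,
        catalan_succ m, pow_succ]
      ring

lemma catalan_pos' (n : ℕ) : 0 < catalan n :=
  Nat.pos_of_ne_zero fun h => by
    have h2 := succ_mul_catalan_eq_centralBinom n
    rw [h, mul_zero] at h2
    exact Nat.centralBinom_ne_zero n h2.symm

lemma catalan_succ_le_four_mul (n : ℕ) : catalan (n + 1) ≤ 4 * catalan n := by
  have h1 := succ_mul_catalan_eq_centralBinom (n + 1)
  have h2 := succ_mul_catalan_eq_centralBinom n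
  have h3 := Nat.succ_mul_centralBinom_succ n
  have key : (n + 1) * ((n + 2) * catalan (n + 1)) = 2 * (2 * n + 1) * ((n + 1) * catalan n) := by
    rw [h2]
    calc (n + 1) * ((n + 2) * catalan (n + 1)) = (n + 1) * ((n + 1 + 1) * catalan (n + 1)) := by
          ring
      _ = (n + 1) * Nat.centralBinom (n + 1) := by rw [h1]
      _ = 2 * (2 * n + 1) * Nat.centralBinom n := h3
  have step1 : (n + 1) * ((n + 2) * catalan (n + 1)) ≤ (n + 1) * ((n + 2) * (4 * catalan n)) := by
    rw [key]
    nlinarith [Nat.zero_le (catalan n)]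
  have step2 := Nat.le_of_mul_le_mul_left step1 (Nat.succ_pos n)
  exact Nat.le_of_mul_le_mul_left step2 (by omega)

lemma catalan_add_le_pow (m j : ℕ) : catalan (m + j) ≤ 4 ^ j * catalan m := by
  induction j with
  | zero => simp
  | succ j ih =>
    calc catalan (m + j + 1) ≤ 4 * catalan (m + j) := catalan_succ_le_four_mul _
      _ ≤ 4 * (4 ^ j * catalan m) := by omega
      _ = 4 ^ (j + 1) * catalan m := by ring

lemma card_mono (P Q : BTree α → Prop) (n : ℕ) (h : ∀ T, T.size = n → P T → Q T) :
    Nat.card {T : BTree α // P T ∧ T.size = n} ≤ Nat.card {T : BTree α // Q T ∧ T.size = n} := by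
  haveI := finite_pred α Q n
  exact Nat.card_le_card_of_injective (fun x => ⟨x.1, h _ x.2.2 x.2.1, x.2.2⟩)
    (fun x y hxy => by
      simp only [Subtype.mk.injEq] at hxy
      exact Subtype.ext hxy)

lemma card_le_full (P : BTree α → Prop) (n : ℕ) :
    Nat.card {T : BTree α // P T ∧ T.size = n} ≤ catalan n * Fintype.card α ^ n := by
  rw [← card_size (α := α) n]
  exact Nat.card_le_card_of_injective (fun x => ⟨x.1, x.2.2⟩)
    (fun x y hxy => by
      simp only [Subtype.mk.injEq] at hxy
      exact Subtype.ext hxy)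

lemma avoid_rec (S : BTree α) (n : ℕ) :
    Nat.card {T : BTree α // ¬BTree.Subtree S T ∧ T.size = n + 1}
      ≤ ∑ i : Fin (n + 1),
          Fintype.card α * Nat.card {T : BTree α // ¬BTree.Subtree S T ∧ T.size = (i : ℕ)}
            * Nat.card {T : BTree α // ¬BTree.Subtree S T ∧ T.size = n - (i : ℕ)} := by
  rw [← card_node_level (fun T => ¬BTree.Subtree S T) n]
  apply card_mono
  intro T hsize hT
  cases T with
  | nil => simp [BTree.size] at hsize
  | node a l r =>
    exact ⟨a, l, r, rfl, fun h => hT (BTree.Subtree.left h), fun h => hT (BTree.Subtree.right h)⟩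

lemma avoid_lt (S : BTree α) :
    Nat.card {T : BTree α // ¬BTree.Subtree S T ∧ T.size = S.size}
      < catalan S.size * Fintype.card α ^ S.size := by
  rw [← card_size (α := α) S.size]
  have e1 : Nat.card {T : BTree α // ¬BTree.Subtree S T ∧ T.size = S.size}
      = Set.ncard {T : BTree α | ¬BTree.Subtree S T ∧ T.size = S.size} :=
    Nat.card_coe_set_eq _
  have e2 : Nat.card {T : BTree α // T.size = S.size}
      = Set.ncard {T : BTree α | T.size = S.size} := Nat.card_coe_set_eq _
  rw [e1, e2]
  have hfin : {T : BTree α | T.size = S.size}.Finite :=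
    (finite_size_le α S.size).subset (fun T hT => le_of_eq (hT : _ = S.size))
  apply Set.ncard_lt_ncard _ hfin
  constructor
  · exact fun T hT => hT.2
  · intro hsub
    exact (hsub (rfl : S.size = S.size)).1 (BTree.Subtree.refl S)


lemma avoid_tendsto [Nonempty α] (S : BTree α) :
    Tendsto (fun n => (Nat.card {T : BTree α // ¬BTree.Subtree S T ∧ T.size = n} : ℝ)
      / ((catalan n : ℝ) * (Fintype.card α : ℝ) ^ n)) atTop (𝓝 0) := by
  set σ : ℝ := (Fintype.card α : ℝ) with hσdef
  have hσ : 1 ≤ σ := by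
    rw [hσdef]
    exact Nat.one_le_cast.mpr Fintype.card_pos
  set k : ℕ := S.size with hkdef
  set ε : ℝ := (σ ^ k * 4 ^ (k + 1))⁻¹ with hεdef
  have hσk : (1 : ℝ) ≤ σ ^ k := one_le_pow₀ hσ
  have h4k : (1 : ℝ) ≤ 4 ^ (k + 1) := one_le_pow₀ (by norm_num)
  have hεpos : 0 < ε := by
    rw [hεdef]
    positivity
  have hεle : ε ≤ 1 := by
    rw [hεdef]
    rw [inv_le_one_iff₀]
    right
    nlinarith
  set θ : ℝ := 1 - ε with hθdef
  have hθ0 : 0 ≤ θ := by rw [hθdef]; linarith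
  have hθ1 : θ < 1 := by rw [hθdef]; linarith
  set a : ℕ → ℝ := fun n => (Nat.card {T : BTree α // ¬BTree.Subtree S T ∧ T.size = n} : ℝ)
    with hadef
  set C : ℕ → ℝ := fun n => (catalan n : ℝ) with hCdef
  have hC0 : ∀ n, 0 < C n := fun n => by
    simp only [hCdef]
    exact_mod_cast catalan_pos' n
  have ha0 : ∀ n, 0 ≤ a n := fun n => Nat.cast_nonneg _
  have bound0 : ∀ m, a m ≤ C m * σ ^ m := by
    intro m
    have h := card_le_full (α := α) (fun T => ¬BTree.Subtree S T) m
    simp only [hadef, hCdef, hσdef]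
    have h2 := Nat.cast_le (α := ℝ).mpr h
    push_cast at h2
    exact h2
  have boundk : a k ≤ C k * σ ^ k - 1 := by
    have h := avoid_lt (α := α) S
    have h' : Nat.card {T : BTree α // ¬BTree.Subtree S T ∧ T.size = S.size} + 1
        ≤ catalan S.size * Fintype.card α ^ S.size := Nat.succ_le_of_lt h
    have h2 := Nat.cast_le (α := ℝ).mpr h'
    push_cast at h2
    simp only [hadef, hCdef, hσdef, hkdef]
    linarith
  have main : ∀ t : ℕ, ∃ N : ℕ, ∀ n, N ≤ n → a n ≤ θ ^ t * (C n * σ ^ n) := by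
    intro t
    induction t with
    | zero => exact ⟨0, fun n _ => by simpa using bound0 n⟩
    | succ t ih =>
      obtain ⟨N, hN⟩ := ih
      refine ⟨2 * N + k + 2, fun n hn => ?_⟩
      obtain ⟨m, rfl⟩ : ∃ m, n = m + 1 := ⟨n - 1, by omega⟩
      have hm : 2 * N + k + 1 ≤ m := by omega
      -- the recurrence, cast to ℝ
      have hrec : a (m + 1) ≤ ∑ i : Fin (m + 1), σ * a (i : ℕ) * a (m - (i : ℕ)) := by
        have h := avoid_rec S m
        have hc : ((Nat.card {T : BTree α // ¬BTree.Subtree S T ∧ T.size = m + 1} : ℕ) : ℝ)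
            ≤ ((∑ i : Fin (m + 1),
              Fintype.card α * Nat.card {T : BTree α // ¬BTree.Subtree S T ∧ T.size = (i : ℕ)}
                * Nat.card {T : BTree α // ¬BTree.Subtree S T ∧ T.size = m - (i : ℕ)} : ℕ) : ℝ) :=
          Nat.cast_le.mpr h
        push_cast at hc
        exact hc
      -- generic term bound
      have hgen : ∀ i : Fin (m + 1), a (i : ℕ) * a (m - (i : ℕ))
          ≤ θ ^ t * (C (i : ℕ) * C (m - (i : ℕ))) * σ ^ m := by
        intro i
        have hile : (i : ℕ) ≤ m := Nat.lt_succ_iff.mp i.2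
        have hpow : σ ^ (i : ℕ) * σ ^ (m - (i : ℕ)) = σ ^ m := by
          rw [← pow_add]
          congr 1
          omega
        rcases le_or_gt N (i : ℕ) with hi | hi
        · have h1 := hN _ hi
          have h2 := bound0 (m - (i : ℕ))
          have := mul_le_mul h1 h2 (ha0 _) (by positivity)
          calc a (i : ℕ) * a (m - (i : ℕ))
              ≤ θ ^ t * (C (i : ℕ) * σ ^ (i : ℕ)) * (C (m - (i : ℕ)) * σ ^ (m - (i : ℕ))) := this
            _ = θ ^ t * (C (i : ℕ) * C (m - (i : ℕ))) * (σ ^ (i : ℕ) * σ ^ (m - (i : ℕ))) := by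
                ring
            _ = θ ^ t * (C (i : ℕ) * C (m - (i : ℕ))) * σ ^ m := by rw [hpow]
        · have hni : N ≤ m - (i : ℕ) := by omega
          have h1 := hN _ hni
          have h2 := bound0 (i : ℕ)
          have := mul_le_mul h2 h1 (ha0 _) (by positivity)
          calc a (i : ℕ) * a (m - (i : ℕ))
              ≤ (C (i : ℕ) * σ ^ (i : ℕ)) * (θ ^ t * (C (m - (i : ℕ)) * σ ^ (m - (i : ℕ)))) := this
            _ = θ ^ t * (C (i : ℕ) * C (m - (i : ℕ))) * (σ ^ (i : ℕ) * σ ^ (m - (i : ℕ))) := by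
                ring
            _ = θ ^ t * (C (i : ℕ) * C (m - (i : ℕ))) * σ ^ m := by rw [hpow]
      -- the special term at i = k
      have hkm : k < m + 1 := by omega
      set kF : Fin (m + 1) := ⟨k, hkm⟩ with hkF
      have hkterm : a (kF : ℕ) * a (m - (kF : ℕ))
          ≤ θ ^ t * (C (kF : ℕ) * C (m - (kF : ℕ))) * σ ^ m
            - θ ^ t * C (m - k) * σ ^ (m - k) := by
        have hvk : (kF : ℕ) = k := rfl
        rw [hvk]
        have hNk : N ≤ m - k := by omega
        have h1 := hN _ hNk
        have h2 : (0 : ℝ) ≤ C k * σ ^ k - 1 := by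
          have := hC0 k
          have h1k : (1:ℝ) ≤ C k := by
            simp only [hCdef]
            exact Nat.one_le_cast.mpr (catalan_pos' k)
          nlinarith
        have := mul_le_mul boundk h1 (ha0 _) h2
        have hpow : σ ^ k * σ ^ (m - k) = σ ^ m := by
          rw [← pow_add]
          congr 1
          omega
        calc a k * a (m - k) ≤ (C k * σ ^ k - 1) * (θ ^ t * (C (m - k) * σ ^ (m - k))) := this
          _ = θ ^ t * (C k * C (m - k)) * (σ ^ k * σ ^ (m - k))
              - θ ^ t * C (m - k) * σ ^ (m - k) := by ring
          _ = θ ^ t * (C k * C (m - k)) * σ ^ m - θ ^ t * C (m - k) * σ ^ (m - k) := by rw [hpow]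
      -- sum the bounds
      set B : Fin (m + 1) → ℝ := fun i => θ ^ t * (C (i : ℕ) * C (m - (i : ℕ))) * σ ^ m with hB
      set g : Fin (m + 1) → ℝ := fun i => a (i : ℕ) * a (m - (i : ℕ)) with hgdef
      have hsplit : ∑ i, g i ≤ (∑ i, B i) - θ ^ t * C (m - k) * σ ^ (m - k) := by
        rw [← Finset.sum_erase_add Finset.univ g (Finset.mem_univ kF),
          ← Finset.sum_erase_add Finset.univ B (Finset.mem_univ kF)]
        have h1 : ∑ i ∈ Finset.univ.erase kF, g i ≤ ∑ i ∈ Finset.univ.erase kF, B i :=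
          Finset.sum_le_sum fun i _ => hgen i
        have h2 := hkterm
        simp only [hgdef, hB] at h1 h2 ⊢
        linarith
      have hsumB : ∑ i, B i = θ ^ t * σ ^ m * C (m + 1) := by
        rw [hB]
        rw [← Finset.sum_mul, ← Finset.mul_sum]
        have : ∑ i : Fin (m + 1), C (i : ℕ) * C (m - (i : ℕ)) = C (m + 1) := by
          rw [hCdef]
          push_cast [catalan_succ m]
          rfl
        rw [this]
        ring
      -- put it together
      have step1 : a (m + 1) ≤ σ * ((∑ i, B i) - θ ^ t * C (m - k) * σ ^ (m - k)) := by
        have : ∑ i : Fin (m + 1), σ * a (i : ℕ) * a (m - (i : ℕ)) = σ * ∑ i, g i := by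
          rw [Finset.mul_sum]
          exact Finset.sum_congr rfl fun i _ => by rw [hgdef]; ring
        rw [this] at hrec
        exact hrec.trans (by
          have hσ0 : (0:ℝ) ≤ σ := by linarith
          exact mul_le_mul_of_nonneg_left hsplit hσ0)
      rw [hsumB] at step1
      -- final inequality
      have hfin : σ * (θ ^ t * σ ^ m * C (m + 1) - θ ^ t * C (m - k) * σ ^ (m - k))
          ≤ θ ^ (t + 1) * (C (m + 1) * σ ^ (m + 1)) := by
        have hθsucc : θ ^ (t + 1) = θ ^ t - ε * θ ^ t := by
          rw [pow_succ, hθdef]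
          ring
        have hkey : ε * (σ ^ (m + 1) * C (m + 1)) ≤ C (m - k) * σ ^ (m + 1 - k) := by
          have hcat : C (m + 1) ≤ 4 ^ (k + 1) * C (m - k) := by
            have h := catalan_add_le_pow (m - k) (k + 1)
            have heq : m - k + (k + 1) = m + 1 := by omega
            rw [heq] at h
            simp only [hCdef]
            exact_mod_cast h
          have hpowσ : σ ^ (m + 1) = σ ^ k * σ ^ (m + 1 - k) := by
            rw [← pow_add]
            congr 1
            omega
          rw [hεdef, hpowσ]
          rw [inv_mul_le_iff₀ (by positivity)]
          calc σ ^ k * σ ^ (m + 1 - k) * C (m + 1)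
              ≤ σ ^ k * σ ^ (m + 1 - k) * (4 ^ (k + 1) * C (m - k)) := by
                apply mul_le_mul_of_nonneg_left _ (by positivity)
                exact hcat
            _ = σ ^ k * 4 ^ (k + 1) * (C (m - k) * σ ^ (m + 1 - k)) := by ring
        have hθt : (0:ℝ) ≤ θ ^ t := by positivity
        have := mul_le_mul_of_nonneg_left hkey hθt
        have hpows : σ * σ ^ (m - k) = σ ^ (m + 1 - k) := by
          rw [← pow_succ']
          congr 1
          omega
        have hpown : σ * σ ^ m = σ ^ (m + 1) := by rw [← pow_succ']
        have expand : σ * (θ ^ t * σ ^ m * C (m + 1) - θ ^ t * C (m - k) * σ ^ (m - k))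
            = θ ^ t * σ ^ (m + 1) * C (m + 1) - θ ^ t * C (m - k) * σ ^ (m + 1 - k) := by
          rw [← hpown, ← hpows]
          ring
        have expand2 : (θ ^ t - ε * θ ^ t) * (C (m + 1) * σ ^ (m + 1))
            = θ ^ t * σ ^ (m + 1) * C (m + 1) - θ ^ t * (ε * (σ ^ (m + 1) * C (m + 1))) := by
          ring
        rw [hθsucc, expand, expand2]
        have h3 : θ ^ t * (C (m - k) * σ ^ (m + 1 - k)) = θ ^ t * C (m - k) * σ ^ (m + 1 - k) := by
          ring
        linarith [h3 ▸ this]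
      exact step1.trans hfin
  -- conclude tendsto
  rw [Metric.tendsto_atTop]
  intro δ hδ
  obtain ⟨t, ht⟩ : ∃ t : ℕ, θ ^ t < δ := by
    have := tendsto_pow_atTop_nhds_zero_of_lt_one hθ0 hθ1
    rcases (this.eventually (gt_mem_nhds hδ)).exists with ⟨t, ht⟩
    exact ⟨t, ht⟩
  obtain ⟨N, hN⟩ := main t
  refine ⟨N, fun n hn => ?_⟩
  rw [Real.dist_eq, sub_zero]
  have hden : 0 < C n * σ ^ n :=
    mul_pos (hC0 n) (pow_pos (lt_of_lt_of_le zero_lt_one hσ) n)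
  have h1 : a n / (C n * σ ^ n) ≤ θ ^ t := by
    rw [div_le_iff₀ hden]
    exact hN n hn
  have h2 : 0 ≤ a n / (C n * σ ^ n) := div_nonneg (ha0 n) (le_of_lt hden)
  rw [abs_of_nonneg h2]
  exact lt_of_le_of_lt h1 ht


section Automaton

variable {Q : Type} (Δ : Option Q → Option Q → α → Q → Prop) (F : Set Q)

lemma run_some_of_ne_nil {T : BTree α} {o : Option Q} (h : Run Δ T o) (hne : T ≠ BTree.nil) :
    ∃ q, o = some q := by
  cases h with
  | nil => exact absurd rfl hne
  | node _ _ _ => exact ⟨_, rfl⟩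

lemma graft {S T : BTree α} (hsub : BTree.Subtree S T) :
    ∀ {p : Q}, Run Δ T (some p) → S ≠ BTree.nil →
      ∃ q : Q, Run Δ S (some q) ∧ ∃ (f : BTree α → BTree α) (m : ℕ), Function.Injective f ∧
        (∀ X, (f X).size = X.size + m) ∧ (∀ X, Run Δ X (some q) → Run Δ (f X) (some p)) := by
  induction hsub with
  | refl =>
    intro p hrun _
    exact ⟨p, hrun, id, 0, fun x y h => h, fun X => by simp, fun X h => h⟩
  | @left l r a' hsl ih =>
    intro p hrun hSnil
    cases hrun with
    | node hl hr hδ =>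
      have hlne : l ≠ BTree.nil := by
        intro hl0
        subst hl0
        cases hsl
        exact hSnil rfl
      obtain ⟨pl, rfl⟩ := run_some_of_ne_nil Δ hl hlne
      obtain ⟨q, hq, f, m, hinj, hsz, hmap⟩ := ih hl hSnil
      refine ⟨q, hq, fun X => BTree.node a' (f X) r, m + r.size + 1, ?_, ?_, ?_⟩
      · intro x y h
        simp only [BTree.node.injEq] at h
        exact hinj h.2.1
      · intro X
        simp only [BTree.size, hsz]
        omega
      · intro X hX
        exact Run.node (hmap X hX) hr hδ
  | @right l r a' hsr ih =>
    intro p hrun hSnil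
    cases hrun with
    | node hl hr hδ =>
      have hrne : r ≠ BTree.nil := by
        intro hr0
        subst hr0
        cases hsr
        exact hSnil rfl
      obtain ⟨pr, rfl⟩ := run_some_of_ne_nil Δ hr hrne
      obtain ⟨q, hq, f, m, hinj, hsz, hmap⟩ := ih hr hSnil
      refine ⟨q, hq, fun X => BTree.node a' l (f X), m + l.size + 1, ?_, ?_, ?_⟩
      · intro x y h
        simp only [BTree.node.injEq] at h
        exact hinj h.2.2
      · intro X
        simp only [BTree.size, hsz]
        omega
      · intro X hX
        exact Run.node hl (hmap X hX) hδ

/-- A state is good if some injective size-shifting context sends every tree running to it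
into the language. -/
def GoodAt (q : Q) : Prop :=
  ∃ (f : BTree α → BTree α) (m : ℕ), Function.Injective f ∧
    (∀ X, (f X).size = X.size + m) ∧ ∀ X, Run Δ X (some q) → TAccepts Δ F (f X)

lemma cover (hno : ∀ S : BTree α, ∃ T, BTree.Subtree S T ∧ TAccepts Δ F T) :
    ∀ T : BTree α, T ≠ BTree.nil → ∃ q, GoodAt Δ F q ∧ Run Δ T (some q) := by
  intro T hT
  obtain ⟨W, hsub, p, hp, hrun⟩ := hno T
  obtain ⟨q, hq, f, m, hinj, hsz, hmap⟩ := graft Δ hsub hrun hT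
  exact ⟨q, ⟨f, m, hinj, hsz, fun X hX => ⟨p, hp, hmap X hX⟩⟩, hq⟩

lemma cover_card [Fintype α] [Fintype Q]
    (hno : ∀ S : BTree α, ∃ T, BTree.Subtree S T ∧ TAccepts Δ F T) (n : ℕ) (hn : 1 ≤ n) :
    catalan n * Fintype.card α ^ n
      ≤ ∑ q : Q, Nat.card {T : BTree α // (GoodAt Δ F q ∧ Run Δ T (some q)) ∧ T.size = n} := by
  classical
  rw [← card_size (α := α) n]
  haveI := fun q : Q => finite_pred α (fun T => GoodAt Δ F q ∧ Run Δ T (some q)) n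
  have hne : ∀ x : {T : BTree α // T.size = n}, x.1 ≠ BTree.nil := by
    intro x hx
    have := x.2
    rw [hx] at this
    simp only [BTree.size] at this
    omega
  have key : Nat.card {T : BTree α // T.size = n}
      ≤ Nat.card (Σ q : Q, {T : BTree α // (GoodAt Δ F q ∧ Run Δ T (some q)) ∧ T.size = n}) := by
    apply Nat.card_le_card_of_injective (fun x =>
      ⟨Classical.choose (cover Δ F hno x.1 (hne x)), x.1,
        ⟨(Classical.choose_spec (cover Δ F hno x.1 (hne x))).1,
         (Classical.choose_spec (cover Δ F hno x.1 (hne x))).2⟩, x.2⟩)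
    intro x y h
    exact Subtype.ext (congrArg (fun z => z.2.1) h)
  rwa [nat_card_sigma] at key

end Automaton

end Aux

/-- A regular tree language has asymptotic density 0 iff some tree `S` is a
forbidden subtree, i.e. `{T : S ⪯ T} ⊆ ℬ^Σ \ L`. -/
theorem sparse_regular_tree_iff_forbidden_subtree {α : Type*} [Fintype α] [Nonempty α]
    (L : Set (BTree α)) (hL : RegularTreeLang L) :
    HasDensity L 0 ↔ ∃ S : BTree α, {T : BTree α | BTree.Subtree S T} ⊆ Lᶜ := by
  classical
  constructor
  · -- hard direction
    intro h0
    by_contra hno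
    obtain ⟨Q, hQ, Δ, F, rfl⟩ := hL
    haveI := hQ
    have hno' : ∀ S : BTree α, ∃ T, BTree.Subtree S T ∧ TAccepts Δ F T := by
      intro S
      have h := Set.not_subset.mp (fun hsub => hno ⟨S, hsub⟩)
      obtain ⟨T, hT1, hT2⟩ := h
      exact ⟨T, hT1, by simpa using hT2⟩
    have h0' : Tendsto (density {T : BTree α | TAccepts Δ F T}) atTop (𝓝 0) := h0
    set σR : ℝ := (Fintype.card α : ℝ) with hσR
    have hσpos : (0 : ℝ) < σR := by
      rw [hσR]
      exact_mod_cast Fintype.card_pos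
    set dn : ℕ → ℝ := fun n => (catalan n : ℝ) * σR ^ n with hdn
    have hdnpos : ∀ n, 0 < dn n := fun n =>
      mul_pos (by exact_mod_cast catalan_pos' n) (pow_pos hσpos n)
    set tq : Q → ℕ → ℝ := fun q n =>
      (Nat.card {T : BTree α // (GoodAt Δ F q ∧ Run Δ T (some q)) ∧ T.size = n} : ℝ) / dn n
      with htq
    have hdeneq : ∀ m : ℕ, density {T : BTree α | TAccepts Δ F T} m
        = (Nat.card {T : BTree α // T ∈ {T : BTree α | TAccepts Δ F T} ∧ T.size = m} : ℝ)
          / dn m := fun m => rfl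
    have htend : ∀ q : Q, Tendsto (tq q) atTop (𝓝 0) := by
      intro q
      by_cases hg : GoodAt Δ F q
      · obtain ⟨f, m, hinj, hsz, hacc⟩ := hg
        have hgq : GoodAt Δ F q := ⟨f, m, hinj, hsz, hacc⟩
        have hcard : ∀ n, Nat.card {T : BTree α // (GoodAt Δ F q ∧ Run Δ T (some q)) ∧ T.size = n}
            ≤ Nat.card {T : BTree α // T ∈ {T : BTree α | TAccepts Δ F T} ∧ T.size = n + m} := by
          intro n
          haveI := finite_pred α (fun T => T ∈ {T : BTree α | TAccepts Δ F T}) (n + m)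
          apply Nat.card_le_card_of_injective
            (fun x => ⟨f x.1, hacc _ x.2.1.2, by rw [hsz, x.2.2]⟩)
          intro x y h
          have h2 : f x.1 = f y.1 := congrArg Subtype.val h
          exact Subtype.ext (hinj h2)
        set K : ℝ := (4 : ℝ) ^ m * σR ^ m with hK
        have hKpos : 0 < K := by
          rw [hK]
          exact mul_pos (by positivity) (pow_pos hσpos m)
        have hb : ∀ n, tq q n ≤ K * density {T : BTree α | TAccepts Δ F T} (n + m) := by
          intro n
          have h1 : dn (n + m) ≤ K * dn n := by
            have hc : (catalan (n + m) : ℝ) ≤ (4 : ℝ) ^ m * (catalan n : ℝ) := by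
              exact_mod_cast catalan_add_le_pow n m
            have hp : σR ^ (n + m) = σR ^ n * σR ^ m := by rw [pow_add]
            have hσn : (0:ℝ) < σR ^ (n + m) := pow_pos hσpos _
            calc dn (n + m) = (catalan (n + m) : ℝ) * σR ^ (n + m) := rfl
              _ ≤ ((4 : ℝ) ^ m * (catalan n : ℝ)) * σR ^ (n + m) :=
                  mul_le_mul_of_nonneg_right hc hσn.le
              _ = K * ((catalan n : ℝ) * σR ^ n) := by rw [hp, hK]; ring
              _ = K * dn n := rfl
          set cL : ℝ := (Nat.card {T : BTree α // T ∈ {T : BTree α | TAccepts Δ F T}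
            ∧ T.size = n + m} : ℝ) with hcL
          have hcL0 : 0 ≤ cL := Nat.cast_nonneg _
          have step1 : tq q n ≤ cL / dn n :=
            div_le_div_of_nonneg_right (by rw [hcL]; exact_mod_cast hcard n) (hdnpos n).le
          have step2 : cL / dn n ≤ K * (cL / dn (n + m)) := by
            rw [mul_div_assoc'] at *
            rw [div_le_div_iff₀ (hdnpos n) (hdnpos (n + m))]
            have := mul_le_mul_of_nonneg_left h1 hcL0
            nlinarith
          calc tq q n ≤ cL / dn n := step1
            _ ≤ K * (cL / dn (n + m)) := step2
            _ = K * density {T : BTree α | TAccepts Δ F T} (n + m) := by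
                rw [hdeneq (n + m), hcL]
        have hshift : Tendsto (fun n => density {T : BTree α | TAccepts Δ F T} (n + m))
            atTop (𝓝 0) := h0'.comp (tendsto_add_atTop_nat m)
        have hlim : Tendsto (fun n => K * density {T : BTree α | TAccepts Δ F T} (n + m))
            atTop (𝓝 0) := by
          have := hshift.const_mul K
          simpa using this
        refine tendsto_of_tendsto_of_tendsto_of_le_of_le tendsto_const_nhds hlim ?_ ?_
        · intro n
          exact div_nonneg (Nat.cast_nonneg _) (hdnpos n).le
        · exact hb
      · have hempty : ∀ n, Nat.card {T : BTree α //
            (GoodAt Δ F q ∧ Run Δ T (some q)) ∧ T.size = n} = 0 := by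
          intro n
          haveI : IsEmpty {T : BTree α // (GoodAt Δ F q ∧ Run Δ T (some q)) ∧ T.size = n} :=
            ⟨fun x => hg x.2.1.1⟩
          exact Nat.card_of_isEmpty
        have : tq q = fun _ => 0 := by
          funext n
          rw [htq]
          simp [hempty n]
        rw [this]
        exact tendsto_const_nhds
    have hsum : Tendsto (fun n => ∑ q : Q, tq q n) atTop (𝓝 0) := by
      have := tendsto_finset_sum Finset.univ (fun q (_ : q ∈ Finset.univ) => htend q)
      simpa using this
    have hlow : ∀ n : ℕ, 1 ≤ n → (1 : ℝ) ≤ ∑ q : Q, tq q n := by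
      intro n hn
      have hc := cover_card Δ F hno' n hn
      have hcast : dn n ≤ ∑ q : Q, (Nat.card {T : BTree α //
          (GoodAt Δ F q ∧ Run Δ T (some q)) ∧ T.size = n} : ℝ) := by
        have h2 := Nat.cast_le (α := ℝ).mpr hc
        push_cast at h2
        exact h2
      have hsum_eq : ∑ q : Q, tq q n = (∑ q : Q, (Nat.card {T : BTree α //
          (GoodAt Δ F q ∧ Run Δ T (some q)) ∧ T.size = n} : ℝ)) / dn n := by
        rw [htq, Finset.sum_div]
      rw [hsum_eq]
      rw [le_div_iff₀ (hdnpos n), one_mul]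
      exact hcast
    have hev : ∀ᶠ n in atTop, (∑ q : Q, tq q n) < 1 ∧ 1 ≤ n :=
      (hsum.eventually (gt_mem_nhds one_pos)).and (eventually_ge_atTop 1)
    obtain ⟨n, hn1, hn2⟩ := hev.exists
    linarith [hlow n hn2]
  · -- easy direction
    rintro ⟨S, hS⟩
    have hmono : ∀ n, Nat.card {T : BTree α // T ∈ L ∧ T.size = n}
        ≤ Nat.card {T : BTree α // ¬BTree.Subtree S T ∧ T.size = n} := by
      intro n
      apply card_mono
      intro T _ hTL hsub
      exact hS hsub hTL
    show Tendsto (density L) atTop (𝓝 0)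
    refine tendsto_of_tendsto_of_tendsto_of_le_of_le tendsto_const_nhds (avoid_tendsto S) ?_ ?_
    · intro n
      apply div_nonneg (Nat.cast_nonneg _)
      positivity
    · intro n
      show (Nat.card {T : BTree α // T ∈ L ∧ T.size = n} : ℝ)
          / ((catalan n : ℝ) * (Fintype.card α : ℝ) ^ n)
        ≤ (Nat.card {T : BTree α // ¬BTree.Subtree S T ∧ T.size = n} : ℝ)
          / ((catalan n : ℝ) * (Fintype.card α : ℝ) ^ n)
      have hden : (0:ℝ) < (catalan n : ℝ) * (Fintype.card α : ℝ) ^ n := by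
        have h1 : (0:ℝ) < (catalan n : ℝ) := by exact_mod_cast catalan_pos' n
        have h2 : (0:ℝ) < (Fintype.card α : ℝ) := by exact_mod_cast Fintype.card_pos
        positivity
      exact div_le_div_of_nonneg_right (by exact_mod_cast hmono n) hden.le

end Sparse
end

section
/- Let A = (Σ,Q,q₀,δ,F) be a deterministic finite automaton over a finite nonempty alphabet Σ in which every state is reachable from the initial state q₀. Then the language L(A) accepted by A is infix complete if and only if some closed reachability class of A contains an accepting state. -/
open Filter Topology MeasureTheory

namespace Sparse

variable {α : Type*}

/-- The finite word `w` is a prefix of the ω-word `ζ`. -/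
def PrefixO (w : List α) (ζ : ℕ → α) : Prop :=
  ∀ i : Fin w.length, ζ i = w.get i

/-- Concatenation `w · ζ` of a finite word with an ω-word. -/
def appendO (w : List α) (ζ : ℕ → α) : ℕ → α :=
  fun n => if h : n < w.length then w.get ⟨n, h⟩ else ζ (n - w.length)

/-- The concatenation `v 0 · v 1 · ⋯ · v (k-1)` of the first `k` words of a sequence of words. -/
def joinUpTo (v : ℕ → List α) (k : ℕ) : List α :=
  (List.ofFn (fun i : Fin k => v i)).flatten

/-- `V^ω`: the set of ω-words of the form `v₁ · v₂ · v₃ ⋯` with all `vᵢ ∈ V`.  An ω-word `ζ` is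
such an infinite concatenation iff each finite concatenation `v₁ ⋯ v_k` is a prefix of `ζ` and
the lengths of these finite concatenations tend to infinity. -/
def omegaPow (V : Set (List α)) : Set (ℕ → α) :=
  {ζ | ∃ v : ℕ → List α, (∀ i, v i ∈ V) ∧
    Tendsto (fun k => (joinUpTo v k).length) atTop atTop ∧
    ∀ k, PrefixO (joinUpTo v k) ζ}

/-- `U · V^ω = {u · v₁ · v₂ ⋯ : u ∈ U, v₁, v₂, … ∈ V}`. -/
def catOmega (U V : Set (List α)) : Set (ℕ → α) :=
  {ζ | ∃ u ∈ U, ∃ ξ ∈ omegaPow V, ζ = appendO u ξ}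

/-- An ω-word `ξ` is rich if every finite word `v` occurs as a factor of `ξ`,
i.e. `ξ = x · v · y` for some finite word `x` and ω-word `y`. -/
def Rich (ξ : ℕ → α) : Prop :=
  ∀ v : List α, ∃ (x : List α) (y : ℕ → α), ξ = appendO (x ++ v) y

/-- `V* `: the set of finite concatenations of words from `V`. -/
def star (V : Set (List α)) : Set (List α) :=
  {w | ∃ l : List (List α), (∀ v ∈ l, v ∈ V) ∧ w = l.flatten}

/-- A language of finite words is regular iff it is accepted by a DFA. -/
def RegularLang (L : Set (List α)) : Prop :=
  ∃ (σ : Type) (_ : Fintype σ) (M : DFA α σ), L = M.accepts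

/-- `L` is infix complete if every finite word occurs as an infix of a word of `L`. -/
def InfixComplete (L : Set (List α)) : Prop :=
  ∀ w : List α, ∃ x y : List α, x ++ w ++ y ∈ L

/-- `q'` is reachable from `q` in the DFA `M`. -/
def DFAReach {σ : Type*} (M : DFA α σ) (q q' : σ) : Prop :=
  ∃ w : List α, M.evalFrom q w = q'

/-- The reachability class of the state `q`: all states `q'` with `q ⇝ q'` and `q' ⇝ q`. -/
def ReachClass {σ : Type*} (M : DFA α σ) (q : σ) : Set σ :=
  {q' | DFAReach M q q' ∧ DFAReach M q' q}

lemma reach_refl {σ : Type*} (M : DFA α σ) (q : σ) : DFAReach M q q := ⟨[], rfl⟩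

lemma reach_trans {σ : Type*} (M : DFA α σ) {q r s : σ}
    (h1 : DFAReach M q r) (h2 : DFAReach M r s) : DFAReach M q s := by
  obtain ⟨w1, h1⟩ := h1; obtain ⟨w2, h2⟩ := h2
  exact ⟨w1 ++ w2, by rw [DFA.evalFrom_of_append, h1, h2]⟩

lemma reach_step {σ : Type*} (M : DFA α σ) (q : σ) (a : α) :
    DFAReach M q (M.step q a) := ⟨[a], rfl⟩

lemma evalFrom_mem_class {σ : Type*} {M : DFA α σ} {q : σ}
    (hcl : ∀ p ∈ ReachClass M q, ∀ a, M.step p a ∈ ReachClass M q)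
    {p : σ} (hp : p ∈ ReachClass M q) (w : List α) :
    M.evalFrom p w ∈ ReachClass M q := by
  induction w generalizing p with
  | nil => exact hp
  | cons a w ih => exact ih (hcl p hp a)

lemma exists_max {σ : Type*} [Fintype σ] (M : DFA α σ) (q : σ) :
    ∃ r, DFAReach M q r ∧ ∀ s, DFAReach M r s → DFAReach M s r := by
  classical
  obtain ⟨r, hr, hmin⟩ := Finset.exists_min_image
    (Finset.univ.filter (fun s => DFAReach M q s))
    (fun s => (Finset.univ.filter (fun t => DFAReach M s t)).card)
    ⟨q, by simp [reach_refl]⟩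
  refine ⟨r, (Finset.mem_filter.mp hr).2, fun s hrs => ?_⟩
  have hs : s ∈ Finset.univ.filter (fun s => DFAReach M q s) := by
    simp only [Finset.mem_filter, Finset.mem_univ, true_and] at hr ⊢
    exact reach_trans M hr hrs
  have hsub : Finset.univ.filter (fun t => DFAReach M s t) ⊆
      Finset.univ.filter (fun t => DFAReach M r t) := by
    intro t ht
    simp only [Finset.mem_filter, Finset.mem_univ, true_and] at ht ⊢
    exact reach_trans M hrs ht
  have heq := Finset.eq_of_subset_of_card_le hsub (hmin s hs)
  have hrmem : r ∈ Finset.univ.filter (fun t => DFAReach M s t) := by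
    rw [heq]; simp [reach_refl]
  simpa using (Finset.mem_filter.mp hrmem).2

lemma exists_word_all {σ : Type*} [Fintype σ] (M : DFA α σ) (l : List σ) :
    ∃ w : List α, ∀ q ∈ l, ∀ s, DFAReach M (M.evalFrom q w) s →
      DFAReach M s (M.evalFrom q w) := by
  induction l with
  | nil => exact ⟨[], by simp⟩
  | cons q l ih =>
    obtain ⟨w, hw⟩ := ih
    obtain ⟨r, ⟨u, hu⟩, hmax⟩ := exists_max M (M.evalFrom q w)
    refine ⟨w ++ u, ?_⟩
    intro p hp s
    rw [DFA.evalFrom_of_append]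
    rcases List.mem_cons.mp hp with rfl | hp
    · rw [hu]; exact hmax s
    · have hm := hw p hp
      set m := M.evalFrom p w with hmdef
      have hmm' : DFAReach M m (M.evalFrom m u) := ⟨u, rfl⟩
      have hm'm : DFAReach M (M.evalFrom m u) m := hm _ hmm'
      intro hms
      exact reach_trans M (hm s (reach_trans M hmm' hms)) hmm'

/-- For a DFA in which every state is reachable, `L(A)` is infix complete iff
some closed reachability class contains an accepting state. -/
theorem infixComplete_iff_closed_class_accepting {α : Type*} {σ : Type*}
    [Fintype α] [Nonempty α] [Fintype σ] (M : DFA α σ)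
    (hreach : ∀ q : σ, DFAReach M M.start q) :
    InfixComplete M.accepts ↔
      ∃ q : σ, (∀ p ∈ ReachClass M q, ∀ a : α, M.step p a ∈ ReachClass M q) ∧
        ∃ p ∈ ReachClass M q, p ∈ M.accept := by
  constructor
  · intro hic
    obtain ⟨w, hw⟩ := exists_word_all M (Finset.univ.toList (α := σ))
    obtain ⟨x, y, hxy⟩ := hic w
    set r := M.evalFrom (M.evalFrom M.start x) w with hr
    have hmax : ∀ s, DFAReach M r s → DFAReach M s r := hw _ (by simp)
    refine ⟨r, ?_, M.evalFrom r y, ⟨⟨y, rfl⟩, hmax _ ⟨y, rfl⟩⟩, ?_⟩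
    · intro p hp a
      have h1 : DFAReach M r (M.step p a) := reach_trans M hp.1 (reach_step M p a)
      exact ⟨h1, hmax _ h1⟩
    · change M.eval (x ++ w ++ y) ∈ M.accept at hxy
      simpa [DFA.eval, DFA.evalFrom_of_append] using hxy
  · rintro ⟨q, hcl, p, hp, hacc⟩
    intro w
    obtain ⟨x, hx⟩ := hreach p
    have h1 : M.evalFrom p w ∈ ReachClass M q := evalFrom_mem_class hcl hp w
    obtain ⟨y1, hy1⟩ := h1.2
    obtain ⟨y2, hy2⟩ := hp.1
    refine ⟨x, y1 ++ y2, ?_⟩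
    change M.eval (x ++ w ++ (y1 ++ y2)) ∈ M.accept
    simp only [DFA.eval, DFA.evalFrom_of_append, hx, hy1, hy2]
    exact hacc

end Sparse
end

section
/- Let A = (Σ,Q,q₀,δ,F) be a deterministic finite automaton over a finite nonempty alphabet Σ in which every state is reachable from q₀, and suppose L(A) is infix complete. Then there exist a word x ∈ Σ* and a natural number k such that for every v ∈ Σ* there is a word y ∈ Σ* with |y| ≤ k and x·v·y ∈ L(A). -/
open Filter Topology MeasureTheory

namespace Sparse

variable {α : Type*}

/-- Shortening: if some word from `p` reaches an accept state, a word of length ≤ card σ does. -/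
lemma shorten {α σ : Type*} [Fintype σ] (M : DFA α σ) :
    ∀ (n : ℕ) (y : List α), y.length ≤ n → ∀ p : σ, M.evalFrom p y ∈ M.accept →
      ∃ z : List α, z.length ≤ Fintype.card σ ∧ M.evalFrom p z ∈ M.accept := by
  intro n
  induction n with
  | zero =>
    intro y hy p hp
    exact ⟨y, by omega, hp⟩
  | succ n ih =>
    intro y hy p hp
    by_cases hlen : y.length ≤ Fintype.card σ
    · exact ⟨y, hlen, hp⟩
    · obtain ⟨q, a, b, c, hx, hab, hb, ha, hbq, hc⟩ :=
        M.evalFrom_split (s := p) (t := M.evalFrom p y) (by omega) rfl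
      refine ih (a ++ c) ?_ p ?_
      · have : y.length = a.length + b.length + c.length := by
          rw [hx]; simp [Nat.add_assoc]
        have hb' : 0 < b.length := List.length_pos_iff.mpr hb
        have : (a ++ c).length = a.length + c.length := by simp
        omega
      · rw [DFA.evalFrom_of_append, ha, hc]
        exact hp

/-- If every state of the DFA `M` is reachable and `L(A)` is infix complete, then
there are a word `x` and a bound `k` such that every `v` can be completed to `x·v·y ∈ L(A)`
with `|y| ≤ k`. -/
theorem uniform_completion_of_infixComplete {α : Type*} {σ : Type*}
    [Fintype α] [Nonempty α] [Fintype σ] (M : DFA α σ)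
    (hreach : ∀ q : σ, ∃ w : List α, M.evalFrom M.start w = q)
    (hic : InfixComplete M.accepts) :
    ∃ (x : List α) (k : ℕ), ∀ v : List α,
      ∃ y : List α, y.length ≤ k ∧ x ++ v ++ y ∈ M.accepts := by
  classical
  -- Coaccessible states
  set Coacc : σ → Prop := fun p => ∃ y, M.evalFrom p y ∈ M.accept with hCoacc
  have coacc_closed : ∀ p v, ¬ Coacc p → ¬ Coacc (M.evalFrom p v) := by
    rintro p v hp ⟨y, hy⟩
    exact hp ⟨v ++ y, by rwa [DFA.evalFrom_of_append]⟩
  -- there is a safe state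
  have hsafe : ∃ q : σ, ∀ v : List α, Coacc (M.evalFrom q v) := by
    by_contra h
    push_neg at h
    -- every state can be killed; kill all states simultaneously
    have kill : ∀ l : List σ, ∃ w : List α, ∀ q ∈ l, ¬ Coacc (M.evalFrom q w) := by
      intro l
      induction l with
      | nil => exact ⟨[], by simp⟩
      | cons q l ih =>
        obtain ⟨w, hw⟩ := ih
        obtain ⟨v, hv⟩ := h (M.evalFrom q w)
        refine ⟨w ++ v, ?_⟩
        intro q' hq'
        rcases List.mem_cons.mp hq' with rfl | hq'
        · rwa [DFA.evalFrom_of_append]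
        · rw [DFA.evalFrom_of_append]
          exact coacc_closed _ _ (hw q' hq')
    obtain ⟨w, hw⟩ := kill (Finset.univ : Finset σ).toList
    obtain ⟨x, y, hxy⟩ := hic w
    change x ++ w ++ y ∈ M.accepts at hxy
    rw [DFA.mem_accepts] at hxy
    rw [DFA.eval, DFA.evalFrom_of_append, DFA.evalFrom_of_append] at hxy
    exact hw (M.evalFrom M.start x) (by simp) ⟨y, hxy⟩
  obtain ⟨q, hq⟩ := hsafe
  obtain ⟨x, hx⟩ := hreach q
  refine ⟨x, Fintype.card σ, fun v => ?_⟩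
  obtain ⟨y, hy⟩ := hq v
  obtain ⟨z, hzlen, hz⟩ := shorten M y.length y le_rfl _ hy
  refine ⟨z, hzlen, ?_⟩
  rw [DFA.mem_accepts, DFA.eval, DFA.evalFrom_of_append, DFA.evalFrom_of_append, hx]
  exact hz

end Sparse
end

section
/- Let Σ be a finite nonempty alphabet and V ⊆ Σ*. Then V^ω contains a rich ω-word if and only if V* is infix complete. -/
open Filter Topology MeasureTheory

namespace Sparse

variable {α : Type*}

/-- Auxiliary lemmas -/
lemma prefixO_appendO (p : List α) (y : ℕ → α) : PrefixO p (appendO p y) := by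
  intro i
  simp [appendO, i.isLt]

lemma appendO_append (p q : List α) (y : ℕ → α) :
    appendO (p ++ q) y = appendO p (appendO q y) := by
  funext n
  simp only [appendO, List.length_append, List.get_eq_getElem]
  rcases lt_or_ge n p.length with h | h
  · rw [dif_pos (by omega), dif_pos h, List.getElem_append_left h]
  · rcases lt_or_ge n (p.length + q.length) with h2 | h2
    · rw [dif_pos h2, dif_neg (by omega), dif_pos (by omega),
        List.getElem_append_right h]
    · rw [dif_neg (by omega), dif_neg (by omega), dif_neg (by omega)]
      congr 1
      omega

lemma prefixO_mono {p q : List α} {ζ : ℕ → α} (h : p <+: q) (hq : PrefixO q ζ) :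
    PrefixO p ζ := by
  intro i
  have h1 : (i : ℕ) < q.length := lt_of_lt_of_le i.isLt h.length_le
  have := hq ⟨i, h1⟩
  simp only [List.get_eq_getElem] at this ⊢
  rw [this, h.getElem i.isLt]

lemma eq_appendO {p : List α} {ζ : ℕ → α} (h : PrefixO p ζ) :
    ζ = appendO p (fun m => ζ (m + p.length)) := by
  funext n
  simp only [appendO]
  split
  · exact h ⟨n, by assumption⟩
  · congr 1
    omega

lemma prefix_of_prefixO {p q : List α} {ζ : ℕ → α} (hp : PrefixO p ζ) (hq : PrefixO q ζ)
    (hle : p.length ≤ q.length) : p <+: q := by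
  rw [List.prefix_iff_eq_take]
  apply List.ext_getElem (by simp [hle])
  intro i h1 h2
  have hiq : i < q.length := lt_of_lt_of_le h1 hle
  have e1 := hp ⟨i, h1⟩
  have e2 := hq ⟨i, hiq⟩
  simp only [List.get_eq_getElem] at e1 e2
  rw [List.getElem_take, ← e2, e1]

lemma isPrefix_flatten {L1 L2 : List (List α)} (h : L1 <+: L2) :
    L1.flatten <+: L2.flatten := by
  obtain ⟨t, rfl⟩ := h
  simp [List.flatten_append]

lemma getD_eq_of_prefix {c d : List α} (h : c <+: d) {i : ℕ} (hi : i < c.length) (x : α) :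
    d.getD i x = c.getD i x := by
  rw [List.getD_eq_getElem _ _ (lt_of_lt_of_le hi h.length_le), List.getD_eq_getElem _ _ hi,
    h.getElem hi]

lemma joinUpTo_succ (v : ℕ → List α) (k : ℕ) :
    joinUpTo v (k + 1) = joinUpTo v k ++ v k := by
  rw [joinUpTo, joinUpTo, List.ofFn_succ', List.concat_eq_append, List.flatten_append]
  simp

lemma joinUpTo_mem_star {V : Set (List α)} {v : ℕ → List α} (hv : ∀ i, v i ∈ V) (k : ℕ) :
    joinUpTo v k ∈ star V := by
  refine ⟨List.ofFn (fun i : Fin k => v i), ?_, rfl⟩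
  intro w hw
  rw [List.mem_ofFn] at hw
  obtain ⟨i, rfl⟩ := hw
  exact hv i

lemma ofFn_eq_take {l : List α} {k : ℕ} (hk : k ≤ l.length) :
    List.ofFn (fun i : Fin k => l[(i : ℕ)]'(lt_of_lt_of_le i.isLt hk)) = l.take k := by
  apply List.ext_getElem (by simp [hk])
  intro i h1 h2
  simp

/-- The list of the first blocks `l 0 ++ [u], …, l (n-1) ++ [u]`. -/
def buildL (u : List α) (l : ℕ → List (List α)) : ℕ → List (List α)
  | 0 => []
  | n + 1 => buildL u l n ++ (l n ++ [u])

lemma buildL_mem {V : Set (List α)} {u : List α} (hu : u ∈ V) {l : ℕ → List (List α)}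
    (hl : ∀ n, ∀ w ∈ l n, w ∈ V) : ∀ n, ∀ w ∈ buildL u l n, w ∈ V := by
  intro n
  induction n with
  | zero => simp [buildL]
  | succ n ih =>
    intro w hw
    simp only [buildL, List.mem_append, List.mem_singleton] at hw
    rcases hw with hw | hw | rfl
    · exact ih w hw
    · exact hl n w hw
    · exact hu

lemma buildL_prefix (u : List α) (l : ℕ → List (List α)) {a b : ℕ} (hab : a ≤ b) :
    buildL u l a <+: buildL u l b := by
  induction b, hab using Nat.le_induction with
  | base => exact List.prefix_refl _
  | succ n hn ih => exact ih.trans (List.prefix_append _ _)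

lemma buildL_length (u : List α) (l : ℕ → List (List α)) (n : ℕ) :
    n ≤ (buildL u l n).length := by
  induction n with
  | zero => simp
  | succ n ih => simp only [buildL, List.length_append, List.length_singleton]; omega

lemma buildL_flatten_length {u : List α} (hu : u ≠ []) (l : ℕ → List (List α)) (n : ℕ) :
    n ≤ (buildL u l n).flatten.length := by
  induction n with
  | zero => simp
  | succ n ih =>
    have : 1 ≤ u.length := List.length_pos_iff.mpr hu
    simp only [buildL, List.flatten_append, List.length_append, List.flatten_cons,
      List.flatten_nil, List.append_nil]
    omega

/-- `V^ω` contains a rich ω-word iff `V*` is infix complete. -/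
theorem omegaPow_rich_iff_star_infixComplete {α : Type*} [Fintype α] [Nonempty α]
    (V : Set (List α)) :
    (∃ ξ ∈ omegaPow V, Rich ξ) ↔ InfixComplete (star V) := by
  constructor
  · rintro ⟨ξ, ⟨v, hvV, hlen, hpre⟩, hrich⟩ w
    obtain ⟨x, y, hxy⟩ := hrich w
    have hp : PrefixO (x ++ w) ξ := hxy ▸ prefixO_appendO _ _
    obtain ⟨k, hk⟩ := (hlen.eventually_ge_atTop (x ++ w).length).exists
    obtain ⟨z, hz⟩ := prefix_of_prefixO hp (hpre k) hk
    exact ⟨x, z, hz ▸ joinUpTo_mem_star hvV k⟩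
  · intro h
    classical
    -- find a nonempty word in V
    have a : α := Classical.arbitrary α
    obtain ⟨x0, y0, l0, hl0V, hl0⟩ := h [a]
    have hfl0 : l0.flatten ≠ [] := by
      rw [← hl0]; simp
    have : ∃ u ∈ l0, u ≠ [] := by
      by_contra hcon
      push_neg at hcon
      exact hfl0 (List.flatten_eq_nil_iff.mpr hcon)
    obtain ⟨u, hul0, hune⟩ := this
    have huV : u ∈ V := hl0V u hul0
    -- enumerate all words
    obtain ⟨e, he⟩ := exists_surjective_nat (List α)
    have H : ∀ n, ∃ L : List (List α), (∀ v ∈ L, v ∈ V) ∧ ∃ x y, L.flatten = x ++ e n ++ y := by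
      intro n
      obtain ⟨x, y, L, hLV, hfl⟩ := h (e n)
      exact ⟨L, hLV, x, y, hfl.symm⟩
    choose l hlV x y hflat using H
    set L : ℕ → List (List α) := buildL u l with hL
    have hLpre : ∀ {i j : ℕ}, i ≤ j → L i <+: L j := fun hij => buildL_prefix u l hij
    have hLlen : ∀ n, n ≤ (L n).length := buildL_length u l
    have hLflen : ∀ n, n ≤ (L n).flatten.length := buildL_flatten_length hune l
    have hLfpre : ∀ {i j : ℕ}, i ≤ j → (L i).flatten <+: (L j).flatten :=
      fun hij => isPrefix_flatten (hLpre hij)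
    -- the ω-word
    set ζ : ℕ → α := fun n => ((L (n + 1)).flatten).getD n a with hζ
    set v : ℕ → List α := fun i => (L (i + 1)).getD i [] with hv
    -- ζ agrees with each flatten (L k)
    have hζval : ∀ (k : ℕ) (i : ℕ) (hi : i < (L k).flatten.length), ζ i = (L k).flatten[i] := by
      intro k i hi
      have hi1 : i < (L (i + 1)).flatten.length := lt_of_lt_of_le (Nat.lt_succ_self i) (hLflen _)
      rcases le_total (i + 1) k with hik | hik
      · rw [hζ]
        simp only
        rw [← getD_eq_of_prefix (hLfpre hik) hi1, List.getD_eq_getElem _ _ hi]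
      · rw [hζ]
        simp only
        rw [getD_eq_of_prefix (hLfpre hik) hi, List.getD_eq_getElem _ _ hi]
    have hζpre : ∀ k, PrefixO ((L k).flatten) ζ := by
      intro k i
      simp only [List.get_eq_getElem]
      exact hζval k i i.isLt
    -- v values
    have hvval : ∀ (k i : ℕ) (hik : i < k), v i = (L k)[i]'(lt_of_lt_of_le hik (hLlen k)) := by
      intro k i hik
      have hi1 : i < (L (i + 1)).length := lt_of_lt_of_le (Nat.lt_succ_self i) (hLlen _)
      have hik' : i + 1 ≤ k := hik
      have hiLk : i < (L k).length := lt_of_lt_of_le hik (hLlen k)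
      rw [hv]
      simp only
      rw [← getD_eq_of_prefix (hLpre hik') hi1, List.getD_eq_getElem _ _ hiLk]
    have hvV : ∀ i, v i ∈ V := by
      intro i
      have hi1 : i < (L (i + 1)).length := lt_of_lt_of_le (Nat.lt_succ_self i) (hLlen _)
      rw [hvval (i + 1) i (Nat.lt_succ_self i)]
      exact buildL_mem huV hlV (i + 1) _ (List.getElem_mem _)
    -- joinUpTo v k = flatten of the first k blocks
    have hjoin : ∀ k, joinUpTo v k = ((L k).take k).flatten := by
      intro k
      have hk : k ≤ (L k).length := hLlen k
      have hfn : (List.ofFn fun i : Fin k => v ↑i) = (L k).take k := by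
        rw [← ofFn_eq_take hk]
        congr 1
        funext i
        exact hvval k i i.isLt
      rw [joinUpTo, hfn]
    have hjoin_pre : ∀ k, joinUpTo v k <+: (L k).flatten := by
      intro k
      rw [hjoin]
      exact isPrefix_flatten (List.take_prefix _ _)
    -- joinUpTo at k = (L N).length recovers flatten (L N)
    have hjoin_full : ∀ N, joinUpTo v ((L N).length) = (L N).flatten := by
      intro N
      rw [hjoin]
      congr 1
      have hNl : N ≤ (L N).length := hLlen N
      have hpre := hLpre hNl
      rw [List.prefix_iff_eq_take] at hpre
      exact hpre.symm
    refine ⟨ζ, ⟨v, hvV, ?_, ?_⟩, ?_⟩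
    · apply Filter.tendsto_atTop_atTop_of_monotone
      · apply monotone_nat_of_le_succ
        intro k
        rw [joinUpTo_succ]
        simp
      · intro N
        refine ⟨(L N).length, ?_⟩
        rw [hjoin_full N]
        exact hLflen N
    · intro k
      exact prefixO_mono (hjoin_pre k) (hζpre k)
    · intro w
      obtain ⟨n, rfl⟩ := he w
      have hsplit : (L (n + 1)).flatten =
          ((L n).flatten ++ x n ++ e n) ++ (y n ++ u) := by
        show (buildL u l (n + 1)).flatten = _
        rw [buildL, List.flatten_append, hL]
        simp only [List.flatten_append, List.flatten_cons, List.flatten_nil, List.append_nil,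
          hflat n]
        simp [List.append_assoc]
      have hp : PrefixO ((L n).flatten ++ x n ++ e n) ζ := by
        apply prefixO_mono _ (hζpre (n + 1))
        rw [hsplit]
        exact List.prefix_append _ _
      refine ⟨(L n).flatten ++ x n, fun m => ζ (m + ((L n).flatten ++ x n ++ e n).length), ?_⟩
      rw [← List.append_assoc] at *
      exact eq_appendO hp


end Sparse
end
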